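/- Every minor of exp(tN), where N is the lower shift matrix, is of the form a·t^d for some rational a ≥ 0 and nonnegative integer d; moreover minors taken on row set i_1 < ⋯ < i_k and column set j_1 < ⋯ < j_k with i_l ≥ j_l for all l have a > 0. -/

import Mathlib

open Matrix

/-- The lower shift matrix `N`. -/
def lowerShift (n : ℕ) : Matrix (Fin n) (Fin n) ℝ :=
  Matrix.of fun i j => if (i : ℕ) = (j : ℕ) + 1 then 1 else 0

namespace MinorAux

/-- The Pascal kernel. -/
noncomputable def Kc (r c : ℕ) : ℚ := (r.choose c : ℚ)

/-- The shift-augmented Pascal kernel. -/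
noncomputable def KQ (r c : ℕ) : ℚ :=
  if r = 0 ∨ c = 0 then (if r = c then 1 else 0) else ((r - 1).choose (c - 1) : ℚ)

/-- The factorial-inverse kernel giving the entries of `exp N`. -/
noncomputable def Ek (r c : ℕ) : ℚ := if c ≤ r then (((r - c).factorial : ℚ))⁻¹ else 0

lemma KQ_of_pos {x y : ℕ} (hx : x ≠ 0) (hy : y ≠ 0) : KQ x y = Kc (x - 1) (y - 1) := by
  simp [KQ, Kc, hx, hy]

lemma KQ_left_zero {y : ℕ} (hy : y ≠ 0) : KQ 0 y = 0 := by simp [KQ, Ne.symm hy]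

lemma KQ_right_zero {x : ℕ} (hx : x ≠ 0) : KQ x 0 = 0 := by simp [KQ, hx]

lemma KQ_zero_zero : KQ 0 0 = 1 := by simp [KQ]

lemma Kc_eq (r c : ℕ) : Kc r c = KQ r c + KQ r (c + 1) := by
  rcases Nat.eq_zero_or_pos r with hr | hr
  · subst hr
    rcases Nat.eq_zero_or_pos c with hc | hc
    · subst hc; simp [Kc, KQ]
    · rw [KQ_left_zero hc.ne', KQ_left_zero (Nat.succ_ne_zero c)]
      simp [Kc, Nat.choose_eq_zero_of_lt hc]
  · rcases Nat.eq_zero_or_pos c with hc | hc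
    · subst hc
      rw [KQ_right_zero hr.ne', KQ_of_pos hr.ne' (Nat.succ_ne_zero 0)]
      simp [Kc]
    · rw [KQ_of_pos hr.ne' hc.ne', KQ_of_pos hr.ne' (Nat.succ_ne_zero c)]
      obtain ⟨r', rfl⟩ : ∃ r', r = r' + 1 := ⟨r - 1, (Nat.succ_pred_eq_of_pos hr).symm⟩
      obtain ⟨c', rfl⟩ : ∃ c', c = c' + 1 := ⟨c - 1, (Nat.succ_pred_eq_of_pos hc).symm⟩
      simp only [Kc, Nat.add_sub_cancel]
      rw [Nat.choose_succ_succ]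
      push_cast
      ring

/-- Multilinear expansion of a Pascal minor into `KQ` minors. -/
lemma det_expand_KQ (k : ℕ) (r c : Fin k → ℕ) :
    (Matrix.of fun i j => Kc (r i) (c j)).det
      = ∑ p ∈ Fintype.piFinset (fun _ : Fin k => ({0, 1} : Finset ℕ)),
          (Matrix.of fun i j => KQ (r i) (c j + p j)).det := by
  rw [← Matrix.det_transpose]
  have h1 : (Matrix.of fun i j => Kc (r i) (c j))ᵀ
      = fun i => ∑ e ∈ ({0, 1} : Finset ℕ), fun j => KQ (r j) (c i + e) := by
    funext i j
    rw [Finset.sum_apply]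
    rw [Finset.sum_pair (by norm_num : (0 : ℕ) ≠ 1)]
    show Kc (r j) (c i) = KQ (r j) (c i + 0) + KQ (r j) (c i + 1)
    rw [add_zero]
    exact Kc_eq _ _
  show Matrix.detRowAlternating ((Matrix.of fun i j => Kc (r i) (c j))ᵀ) = _
  rw [h1]
  rw [show (Matrix.detRowAlternating (R := ℚ) (n := Fin k))
        (fun i => ∑ e ∈ ({0, 1} : Finset ℕ), fun j => KQ (r j) (c i + e))
      = (Matrix.detRowAlternating (R := ℚ) (n := Fin k)).toMultilinearMap
        (fun i => ∑ e ∈ ({0, 1} : Finset ℕ), (fun e' => fun j => KQ (r j) (c i + e')) e)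
      from rfl]
  rw [MultilinearMap.map_sum_finset]
  refine Finset.sum_congr rfl fun p _ => ?_
  rw [← Matrix.det_transpose (Matrix.of fun i j => KQ (r i) (c j + p j))]
  rfl

/-- Total nonnegativity (and dominance positivity) of Pascal minors. -/
lemma pascal_minor (m : ℕ) : ∀ (k : ℕ) (r c : Fin k → ℕ), k + ∑ i, r i ≤ m →
    StrictMono r → StrictMono c →
    0 ≤ (Matrix.of fun i j => Kc (r i) (c j)).det ∧
      ((∀ l, c l ≤ r l) → 0 < (Matrix.of fun i j => Kc (r i) (c j)).det) := by
  induction m using Nat.strong_induction_on with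
  | _ m IH =>
  intro k r c hm hr hc
  match k with
  | 0 =>
    refine ⟨by rw [Matrix.det_fin_zero]; norm_num,
      fun _ => by rw [Matrix.det_fin_zero]; norm_num⟩
  | k + 1 =>
  -- reduction for KQ minors
  have hKQ : ∀ b : Fin (k + 1) → ℕ, StrictMono b →
      0 ≤ (Matrix.of fun i j => KQ (r i) (b j)).det ∧
        ((∀ l, b l ≤ r l) → (b 0 = 0 → r 0 = 0) →
          0 < (Matrix.of fun i j => KQ (r i) (b j)).det) := by
    intro b hb
    by_cases hb0 : b 0 = 0
    · by_cases hr0 : r 0 = 0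
      · -- both zero: peel off corner
        have hrpos : ∀ i : Fin k, r i.succ ≠ 0 := by
          intro i; have := hr (Fin.succ_pos i); omega
        have hbpos : ∀ j : Fin k, b j.succ ≠ 0 := by
          intro j; have := hb (Fin.succ_pos j); omega
        have hdet : (Matrix.of fun i j => KQ (r i) (b j)).det
            = (Matrix.of fun (i j : Fin k) =>
                Kc (r i.succ - 1) (b j.succ - 1)).det := by
          rw [Matrix.det_succ_column_zero]
          rw [Finset.sum_eq_single (0 : Fin (k + 1))]
          · rw [Fin.succAbove_zero]
            have e1 : (Matrix.of fun i j => KQ (r i) (b j)) (0 : Fin (k+1)) 0 = 1 := by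
              show KQ (r 0) (b 0) = 1
              rw [hr0, hb0, KQ_zero_zero]
            rw [e1]
            have e2 : (Matrix.of fun i j => KQ (r i) (b j)).submatrix Fin.succ Fin.succ
                = Matrix.of fun (i j : Fin k) => Kc (r i.succ - 1) (b j.succ - 1) := by
              ext i j
              show KQ (r i.succ) (b j.succ) = _
              rw [KQ_of_pos (hrpos i) (hbpos j)]
              rfl
            rw [e2]
            simp
          · intro i _ hi
            have e0 : (Matrix.of fun i j => KQ (r i) (b j)) i 0 = 0 := by
              show KQ (r i) (b 0) = 0
              rw [hb0]
              refine KQ_right_zero ?_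
              have : r 0 < r i := hr (Fin.pos_of_ne_zero hi)
              omega
            rw [e0]; ring
          · intro h; exact absurd (Finset.mem_univ _) h
        -- apply IH at smaller measure
        have hmono_r : StrictMono (fun i : Fin k => r i.succ - 1) := by
          intro i j hij
          show r i.succ - 1 < r j.succ - 1
          have h1 := hr (Fin.succ_lt_succ_iff.mpr hij)
          have h2 := hrpos i
          omega
        have hmono_b : StrictMono (fun j : Fin k => b j.succ - 1) := by
          intro i j hij
          show b i.succ - 1 < b j.succ - 1
          have h1 := hb (Fin.succ_lt_succ_iff.mpr hij)
          have h2 := hbpos i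
          omega
        have hsum : ∑ i : Fin k, r i.succ ≤ ∑ i : Fin (k+1), r i := by
          rw [Fin.sum_univ_succ]
          omega
        have hsum2 : ∑ i : Fin k, (r i.succ - 1) ≤ ∑ i : Fin k, r i.succ :=
          Finset.sum_le_sum fun i _ => Nat.sub_le _ _
        have hlt : k + ∑ i : Fin k, (r i.succ - 1) < m := by omega
        have := IH _ hlt k (fun i => r i.succ - 1) (fun j => b j.succ - 1)
          le_rfl hmono_r hmono_b
        refine ⟨hdet ▸ this.1, fun h1 _ => hdet ▸ this.2 fun l => ?_⟩
        show b l.succ - 1 ≤ r l.succ - 1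
        have := h1 l.succ
        omega
      · -- b 0 = 0, r 0 ≠ 0: zero column
        have hdet : (Matrix.of fun i j => KQ (r i) (b j)).det = 0 := by
          apply Matrix.det_eq_zero_of_column_eq_zero 0
          intro i
          show KQ (r i) (b 0) = 0
          rw [hb0]
          refine KQ_right_zero ?_
          have := hr.monotone (Fin.zero_le i)
          omega
        exact ⟨le_of_eq hdet.symm, fun _ h2 => absurd (h2 hb0) hr0⟩
    · by_cases hr0 : r 0 = 0
      · -- zero row
        have hdet : (Matrix.of fun i j => KQ (r i) (b j)).det = 0 := by
          apply Matrix.det_eq_zero_of_row_eq_zero 0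
          intro j
          show KQ (r 0) (b j) = 0
          rw [hr0]
          refine KQ_left_zero ?_
          have := hb.monotone (Fin.zero_le j)
          omega
        refine ⟨le_of_eq hdet.symm, fun h1 _ => ?_⟩
        have := h1 0
        omega
      · -- both positive
        have hrpos : ∀ i, r i ≠ 0 := fun i => by
          have := hr.monotone (Fin.zero_le i); omega
        have hbpos : ∀ j, b j ≠ 0 := fun j => by
          have := hb.monotone (Fin.zero_le j); omega
        have hdet : (Matrix.of fun i j => KQ (r i) (b j)).det
            = (Matrix.of fun i j => Kc (r i - 1) (b j - 1)).det := by
          congr 1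
          ext i j
          exact KQ_of_pos (hrpos i) (hbpos j)
        have hmono_r : StrictMono (fun i : Fin (k+1) => r i - 1) := by
          intro i j hij
          show r i - 1 < r j - 1
          have h1 := hr hij
          have h2 := hrpos i
          omega
        have hmono_b : StrictMono (fun j : Fin (k+1) => b j - 1) := by
          intro i j hij
          show b i - 1 < b j - 1
          have h1 := hb hij
          have h2 := hbpos i
          omega
        have hsum : ∑ i : Fin (k+1), (r i - 1) + (k+1) = ∑ i : Fin (k+1), r i := by
          have h2 : ∑ i : Fin (k+1), ((r i - 1) + 1) = ∑ i : Fin (k+1), r i :=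
            Finset.sum_congr rfl fun i _ => by have := hrpos i; omega
          rw [Finset.sum_add_distrib] at h2
          simpa using h2
        have hlt : (k + 1) + ∑ i : Fin (k+1), (r i - 1) < m := by omega
        have := IH _ hlt (k+1) (fun i => r i - 1) (fun j => b j - 1)
          le_rfl hmono_r hmono_b
        refine ⟨hdet ▸ this.1, fun h1 _ => hdet ▸ this.2 fun l => ?_⟩
        show b l - 1 ≤ r l - 1
        have := h1 l
        omega
  -- main expansion
  rw [det_expand_KQ]
  have hterm : ∀ p ∈ Fintype.piFinset (fun _ : Fin (k+1) => ({0, 1} : Finset ℕ)),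
      0 ≤ (Matrix.of fun i j => KQ (r i) (c j + p j)).det := by
    intro p hp
    have hp1 : ∀ j, p j ≤ 1 := by
      intro j
      have := Fintype.mem_piFinset.mp hp j
      simp at this
      rcases this with h | h <;> omega
    by_cases hmono : StrictMono (fun j => c j + p j)
    · exact (hKQ _ hmono).1
    · -- two equal columns
      have hweak : ∀ i j : Fin (k+1), i < j → c i + p i ≤ c j + p j := by
        intro i j hij
        have h1 := hc hij
        have h2 := hp1 i
        omega
      obtain ⟨i, j, hij, hle⟩ : ∃ i j : Fin (k+1), i < j ∧ ¬(c i + p i < c j + p j) := by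
        by_contra hcon
        push_neg at hcon
        exact hmono fun i j hij => hcon i j hij
      have heq : c i + p i = c j + p j := le_antisymm (hweak i j hij) (by omega)
      have : (Matrix.of fun i j => KQ (r i) (c j + p j)).det = 0 := by
        apply Matrix.det_zero_of_column_eq hij.ne
        intro l
        show KQ (r l) (c i + p i) = KQ (r l) (c j + p j)
        rw [heq]
      rw [this]
  constructor
  · exact Finset.sum_nonneg hterm
  · intro hd
    -- the dominant term
    set p0 : Fin (k+1) → ℕ := fun i => if c i < r i then 1 else 0 with hp0
    have hp0mem : p0 ∈ Fintype.piFinset (fun _ : Fin (k+1) => ({0, 1} : Finset ℕ)) := by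
      refine Fintype.mem_piFinset.mpr fun i => ?_
      by_cases h : c i < r i <;> simp [p0, h]
    have hb0mono : StrictMono (fun i => c i + p0 i) := by
      intro i j hij
      show c i + p0 i < c j + p0 j
      have h1 := hc hij
      have h2 := hr hij
      have h3 := hd i
      have h4 := hd j
      by_cases hi : c i < r i <;> by_cases hj : c j < r j <;>
        simp only [p0, hi, hj, if_true, if_false] <;> omega
    refine Finset.sum_pos' hterm ⟨p0, hp0mem, ?_⟩
    refine (hKQ _ hb0mono).2 (fun l => ?_) (fun h0 => ?_)
    · have h3 := hd l
      by_cases hl : c l < r l <;> simp only [p0, hl, if_true, if_false] <;> omega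
    · have h3 := hd 0
      by_cases hl : c 0 < r 0 <;> simp only [p0, hl, if_true, if_false] at h0 <;> omega

lemma Ek_eq (r c : ℕ) :
    Ek r c = ((r.factorial : ℚ))⁻¹ * (((c.factorial : ℚ)) * Kc r c) := by
  by_cases h : c ≤ r
  · rw [Ek, if_pos h, Kc]
    have key : (r.choose c : ℚ) * (c.factorial : ℚ) * ((r - c).factorial : ℚ) =
        (r.factorial : ℚ) := by
      exact_mod_cast congrArg (Nat.cast (R := ℚ)) (Nat.choose_mul_factorial_mul_factorial h)
    have h1 : ((r - c).factorial : ℚ) ≠ 0 := Nat.cast_ne_zero.mpr (Nat.factorial_ne_zero _)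
    have h2 : (r.factorial : ℚ) ≠ 0 := Nat.cast_ne_zero.mpr (Nat.factorial_ne_zero _)
    field_simp
    linarith [key]
  · rw [Ek, if_neg h, Kc, Nat.choose_eq_zero_of_lt (lt_of_not_ge h)]
    simp

lemma Ek_minor (k : ℕ) (vr vc : Fin k → ℕ) :
    (Matrix.of fun i j => Ek (vr i) (vc j)).det
      = (∏ i, ((vr i).factorial : ℚ)⁻¹) *
        ((∏ j, ((vc j).factorial : ℚ)) * (Matrix.of fun i j => Kc (vr i) (vc j)).det) := by
  have h1 : (Matrix.of fun i j => Ek (vr i) (vc j))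
      = Matrix.of fun i j => ((vr i).factorial : ℚ)⁻¹ *
          (Matrix.of fun i j => ((vc j).factorial : ℚ) * Kc (vr i) (vc j)) i j := by
    ext i j
    exact Ek_eq _ _
  rw [h1, Matrix.det_mul_column]
  congr 1
  have h2 : (Matrix.of fun i j => ((vc j).factorial : ℚ) * Kc (vr i) (vc j))
      = Matrix.of fun i j => ((vc j).factorial : ℚ) *
          (Matrix.of fun i j => Kc (vr i) (vc j)) i j := rfl
  rw [h2, Matrix.det_mul_row]

lemma lowerShift_pow (n m : ℕ) :
    (lowerShift n) ^ m
      = Matrix.of fun i j : Fin n => if (i : ℕ) = (j : ℕ) + m then 1 else 0 := by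
  induction m with
  | zero =>
    ext i j
    simp [Matrix.one_apply, Fin.ext_iff]
  | succ m ih =>
    rw [pow_succ, ih]
    ext i j
    rw [Matrix.mul_apply]
    simp only [Matrix.of_apply, lowerShift]
    by_cases hij : (i : ℕ) = (j : ℕ) + (m + 1)
    · have hjn : (j : ℕ) + 1 < n := by
        have := i.isLt
        omega
      rw [Finset.sum_eq_single (⟨(j : ℕ) + 1, hjn⟩ : Fin n)]
      · simp [hij]
        omega
      · intro l _ hl
        have : ¬((l : ℕ) = (j : ℕ) + 1) := by
          intro h
          exact hl (Fin.ext h)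
        simp [this]
      · intro h; exact absurd (Finset.mem_univ _) h
    · rw [if_neg hij, Finset.sum_eq_zero]
      intro l _
      by_cases h1 : (i : ℕ) = (l : ℕ) + m
      · have : ¬((l : ℕ) = (j : ℕ) + 1) := by omega
        simp [this]
      · simp [h1]

lemma lowerShift_pow_eq_zero (n m : ℕ) (h : n ≤ m) : (lowerShift n) ^ m = 0 := by
  rw [lowerShift_pow]
  ext i j
  have := i.isLt
  have : ¬((i : ℕ) = (j : ℕ) + m) := by omega
  simp [this]

lemma exp_lowerShift (n : ℕ) (t : ℝ) :
    NormedSpace.exp (t • lowerShift n)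
      = ∑ m ∈ Finset.range n, (t ^ m * ((m.factorial : ℝ))⁻¹) • (lowerShift n) ^ m := by
  rw [NormedSpace.exp_eq_tsum (𝕂 := ℝ)]
  have h1 : ∀ m : ℕ, ((m.factorial : ℝ))⁻¹ • (t • lowerShift n) ^ m
      = (t ^ m * ((m.factorial : ℝ))⁻¹) • (lowerShift n) ^ m := by
    intro m
    rw [smul_pow, smul_smul, mul_comm]
  simp only [h1]
  apply tsum_eq_sum
  intro m hm
  rw [lowerShift_pow_eq_zero n m (by simpa using hm)]
  rw [smul_zero]

lemma exp_lowerShift_apply (n : ℕ) (t : ℝ) (i j : Fin n) :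
    NormedSpace.exp (t • lowerShift n) i j
      = if (j : ℕ) ≤ (i : ℕ) then
          t ^ ((i : ℕ) - (j : ℕ)) * ((((i : ℕ) - (j : ℕ)).factorial : ℝ))⁻¹
        else 0 := by
  rw [exp_lowerShift]
  rw [Matrix.sum_apply]
  simp only [Matrix.smul_apply, lowerShift_pow, Matrix.of_apply, smul_eq_mul,
    mul_ite, mul_one, mul_zero]
  by_cases h : (j : ℕ) ≤ (i : ℕ)
  · rw [if_pos h, Finset.sum_eq_single ((i : ℕ) - (j : ℕ))]
    · rw [if_pos (by omega)]
    · intro m _ hm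
      rw [if_neg (by omega)]
    · intro hmem
      exfalso
      apply hmem
      refine Finset.mem_range.mpr ?_
      have := i.isLt
      omega
  · rw [if_neg h, Finset.sum_eq_zero]
    intro m _
    rw [if_neg (by omega)]

end MinorAux

/-- every minor of `exp(tN)` (on strictly increasing row and column index
sets) has the form `a·t^d` with `a ≥ 0` rational and `d` a nonnegative integer; if the
row indices dominate the column indices (`i_l ≥ j_l` for all `l`) then `a > 0`. -/
theorem minor_exp_lowerShift (n : ℕ) (k : ℕ) (r c : Fin k → Fin n)
    (hr : StrictMono r) (hc : StrictMono c) :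
    ∃ (a : ℚ) (d : ℕ), 0 ≤ a ∧
      (∀ t : ℝ, ((NormedSpace.exp (t • lowerShift n)).submatrix r c).det =
        (a : ℝ) * t ^ d) ∧
      ((∀ l : Fin k, (c l : ℕ) ≤ (r l : ℕ)) → 0 < a) := by
  classical
  set vr : Fin k → ℕ := fun l => (r l : ℕ) with hvr
  set vc : Fin k → ℕ := fun l => (c l : ℕ) with hvc
  have hvrm : StrictMono vr := fun a b h => hr h
  have hvcm : StrictMono vc := fun a b h => hc h
  set a : ℚ := (Matrix.of fun i j => MinorAux.Ek (vr i) (vc j)).det with ha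
  set d : ℕ := (∑ l, vr l) - (∑ l, vc l) with hd
  have hpascal := MinorAux.pascal_minor (k + ∑ i, vr i) k vr vc le_rfl hvrm hvcm
  have hprod1 : (0:ℚ) < ∏ i, ((vr i).factorial : ℚ)⁻¹ :=
    Finset.prod_pos fun i _ => by
      have := (vr i).factorial_pos
      positivity
  have hprod2 : (0:ℚ) < ∏ j, ((vc j).factorial : ℚ) :=
    Finset.prod_pos fun j _ => by exact_mod_cast (vc j).factorial_pos
  refine ⟨a, d, ?_, ?_, ?_⟩
  · rw [ha, MinorAux.Ek_minor]
    exact mul_nonneg hprod1.le (mul_nonneg hprod2.le hpascal.1)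
  · intro t
    have hM : (NormedSpace.exp (t • lowerShift n)).submatrix r c
        = Matrix.of fun i j =>
            ((MinorAux.Ek (vr i) (vc j) : ℚ) : ℝ) * t ^ (vr i - vc j) := by
      ext i j
      rw [Matrix.submatrix_apply, MinorAux.exp_lowerShift_apply]
      by_cases h : vc j ≤ vr i
      · rw [if_pos h]
        show _ = ((MinorAux.Ek (vr i) (vc j) : ℚ) : ℝ) * _
        simp only [MinorAux.Ek, if_pos h]
        push_cast
        ring
      · rw [if_neg h]
        show (0:ℝ) = ((MinorAux.Ek (vr i) (vc j) : ℚ) : ℝ) * _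
        simp only [MinorAux.Ek, if_neg h]
        simp
    have hcast : ((a : ℚ) : ℝ)
        = (Matrix.of fun i j => ((MinorAux.Ek (vr i) (vc j) : ℚ) : ℝ)).det := by
      rw [ha]
      rw [show (((Matrix.of fun i j => MinorAux.Ek (vr i) (vc j)).det : ℚ) : ℝ)
          = (Rat.castHom ℝ) (Matrix.of fun i j => MinorAux.Ek (vr i) (vc j)).det from rfl]
      rw [RingHom.map_det]
      congr 1
    rw [hM, hcast, Matrix.det_apply', Matrix.det_apply', Finset.sum_mul]
    refine Finset.sum_congr rfl fun σ _ => ?_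
    simp only [Matrix.of_apply]
    by_cases hall : ∀ i, vc i ≤ vr (σ i)
    · have hexp : ∑ i, (vr (σ i) - vc i) = d := by
        rw [Finset.sum_tsub_distrib Finset.univ (fun i _ => hall i)]
        rw [Equiv.sum_comp σ vr]
      have hsplit : ∏ i, (((MinorAux.Ek (vr (σ i)) (vc i) : ℚ) : ℝ) * t ^ (vr (σ i) - vc i))
          = (∏ i, ((MinorAux.Ek (vr (σ i)) (vc i) : ℚ) : ℝ)) * t ^ d := by
        rw [Finset.prod_mul_distrib, Finset.prod_pow_eq_pow_sum, hexp]
      rw [hsplit]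
      ring
    · push_neg at hall
      obtain ⟨i0, hi0⟩ := hall
      have hz : ((MinorAux.Ek (vr (σ i0)) (vc i0) : ℚ) : ℝ) = 0 := by
        simp only [MinorAux.Ek, if_neg (by omega : ¬ vc i0 ≤ vr (σ i0))]
        simp
      rw [Finset.prod_eq_zero (Finset.mem_univ i0) (by rw [hz]; ring),
          Finset.prod_eq_zero (Finset.mem_univ i0) hz]
      ring
  · intro hdom
    rw [ha, MinorAux.Ek_minor]
    exact mul_pos hprod1 (mul_pos hprod2 (hpascal.2 hdom))
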